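/- Let p be a prime, r ≥ 1, and let L be a finite field extension of Q_p with normalized additive valuation v_L (so v_L(L^×) = Z); set e = v_L(p). Suppose (c_n) is a family of elements of Q_p indexed by nonzero multi-indices n = (n_1,…,n_r) ∈ ℕ^r such that gcd(n_1,…,n_r)·c_n ∈ Z_p for every n. Let x = (x_1,…,x_r) ∈ L^r satisfy v_L(x_i) > 0 for all i. Then for every nonzero n one has v_L(c_n·x_1^{n_1}⋯x_r^{n_r}) ≥ |n|·min_i v_L(x_i) − e·log_p(|n|), where |n| = n_1 + ⋯ + n_r; in particular v_L(c_n x^n) → ∞ as |n| → ∞, so the family (c_n x^n) is summable in L. -/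

import Mathlib

open Filter

/-- Let `L/ℚ_p` be a finite extension with normalized additive valuation
`v` (integer-valued on `L^×`, `v = e·v_p` on `ℚ_p`, compatible with the norm topology).
If `gcd(n)·c_n ∈ ℤ_p` for all nonzero multi-indices `n` and `v(x_i) > 0` for all `i`, then
`v(c_n x^n) ≥ |n|·min_i v(x_i) − e·log_p |n|`; in particular `v(c_n x^n) → ∞` as
`|n| → ∞`, and the family `(c_n x^n)` is summable in `L`. -/
theorem valuation_bound_and_summable_of_gcd_int
    {p : ℕ} [Fact p.Prime] {r : ℕ} (hr : 0 < r)
    {L : Type*} [NormedField L] [CompleteSpace L]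
    [Algebra ℚ_[p] L] [FiniteDimensional ℚ_[p] L]
    (v : L → EReal)
    (hv_top : ∀ z : L, v z = ⊤ ↔ z = 0)
    (hv_mul : ∀ a b : L, v (a * b) = v a + v b)
    (hv_add : ∀ a b : L, min (v a) (v b) ≤ v (a + b))
    (hv_int : ∀ z : L, z ≠ 0 → ∃ k : ℤ, v z = ((k : ℝ) : EReal))
    (hv_surj : ∀ k : ℤ, ∃ z : L, v z = ((k : ℝ) : EReal))
    (hv_norm : ∀ a b : L, v a ≤ v b ↔ ‖b‖ ≤ ‖a‖)
    (e : ℤ) (he : v ((p : L)) = ((e : ℝ) : EReal))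
    (hQp : ∀ q : ℚ_[p], q ≠ 0 →
      v (algebraMap ℚ_[p] L q) = (((e * q.valuation : ℤ) : ℝ) : EReal))
    (c : {n : Fin r → ℕ // n ≠ 0} → ℚ_[p])
    (hc : ∀ n : {n : Fin r → ℕ // n ≠ 0},
      ‖((Finset.univ.gcd n.1 : ℕ) : ℚ_[p]) * c n‖ ≤ 1)
    (x : Fin r → L) (hx : ∀ i, (0 : EReal) < v (x i)) :
    (∀ n : {n : Fin r → ℕ // n ≠ 0},
      (((∑ i, n.1 i : ℕ) : EReal)
          * (Finset.univ.inf' (Finset.univ_nonempty_iff.mpr (Fin.pos_iff_nonempty.mp hr))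
              fun i => v (x i)))
        - (((e : ℝ) * Real.logb p (∑ i, n.1 i) : ℝ) : EReal)
        ≤ v (algebraMap ℚ_[p] L (c n) * ∏ i, x i ^ n.1 i)) ∧
    Tendsto (fun n : {n : Fin r → ℕ // n ≠ 0} =>
        v (algebraMap ℚ_[p] L (c n) * ∏ i, x i ^ n.1 i)) cofinite (nhds ⊤) ∧
    Summable (fun n : {n : Fin r → ℕ // n ≠ 0} =>
      algebraMap ℚ_[p] L (c n) * ∏ i, x i ^ n.1 i) := by
  classical
  have hp1 : 1 < p := (Fact.out : p.Prime).one_lt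
  have hp1R : (1 : ℝ) < p := by exact_mod_cast hp1
  have hv0 : v 0 = ⊤ := (hv_top 0).mpr rfl
  have hv1 : v 1 = 0 := by
    obtain ⟨k, hk⟩ := hv_int 1 one_ne_zero
    have h2 : v (1 : L) = v 1 + v 1 := by rw [← hv_mul]; norm_num
    rw [hk, ← EReal.coe_add] at h2
    have hk0 : (k : ℝ) = (k : ℝ) + (k : ℝ) := EReal.coe_eq_coe_iff.mp h2
    have : (k : ℝ) = 0 := by linarith
    rw [hk, this, EReal.coe_zero]
  -- valuation of powers
  have hv_pow : ∀ (z : L) (k : ℤ), v z = ((k : ℝ) : EReal) →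
      ∀ m : ℕ, v (z ^ m) = (((m * k : ℤ) : ℝ) : EReal) := by
    intro z k hk m
    induction m with
    | zero => simpa using hv1
    | succ m ih =>
        rw [pow_succ, hv_mul, ih, hk, ← EReal.coe_add]
        rw [EReal.coe_eq_coe_iff]
        push_cast
        ring
  -- valuation of products
  have hv_prod : ∀ (f : Fin r → L), v (∏ i, f i) = ∑ i, v (f i) := by
    intro f
    induction (Finset.univ : Finset (Fin r)) using Finset.cons_induction with
    | empty => simpa using hv1
    | cons a s ha ih => rw [Finset.prod_cons, Finset.sum_cons, hv_mul, ih]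
  -- nonnegativity on ℕ-casts, hence e ≥ 0
  have hv_nat : ∀ m : ℕ, (0 : EReal) ≤ v ((m : L)) := by
    intro m
    induction m with
    | zero => simp [hv0]
    | succ m ih =>
        have h := hv_add ((m : L)) 1
        rw [hv1] at h
        push_cast
        exact le_trans (le_min ih le_rfl) h
  have he0 : (0 : ℝ) ≤ (e : ℝ) := by
    have h := hv_nat p
    rw [he] at h
    exact_mod_cast h
  set m := Finset.univ.inf' (Finset.univ_nonempty_iff.mpr (Fin.pos_iff_nonempty.mp hr))
      (fun i => v (x i)) with hm
  have hm0 : (0 : EReal) < m := by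
    obtain ⟨j, _, hj⟩ := Finset.exists_mem_eq_inf'
      (Finset.univ_nonempty_iff.mpr (Fin.pos_iff_nonempty.mp hr)) (fun i => v (x i))
    rw [hm, hj]; exact hx j
  have hmle : ∀ i, m ≤ v (x i) := fun i => hm ▸ Finset.inf'_le _ (Finset.mem_univ i)
  -- the key bound
  have key : ∀ n : {n : Fin r → ℕ // n ≠ 0},
      (((∑ i, n.1 i : ℕ) : EReal) * m)
        - (((e : ℝ) * Real.logb p (∑ i, n.1 i) : ℝ) : EReal)
        ≤ v (algebraMap ℚ_[p] L (c n) * ∏ i, x i ^ n.1 i) := by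
    intro n
    by_cases h0 : algebraMap ℚ_[p] L (c n) * ∏ i, x i ^ n.1 i = 0
    · exact le_of_le_of_eq le_top ((hv_top _).mpr h0).symm
    have hcn : c n ≠ 0 := by
      intro h; apply h0; rw [h, map_zero, zero_mul]
    have hprod : (∏ i, x i ^ n.1 i) ≠ 0 := right_ne_zero_of_mul h0
    have hxi : ∀ i, n.1 i ≠ 0 → x i ≠ 0 := by
      intro i hni hxi0
      apply hprod
      apply Finset.prod_eq_zero (Finset.mem_univ i)
      rw [hxi0, zero_pow hni]
    -- N and g
    set N := ∑ i, n.1 i with hNdef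
    obtain ⟨j0, hj0⟩ : ∃ i, n.1 i ≠ 0 := by
      by_contra h
      push_neg at h
      exact n.2 (funext fun i => h i)
    have hNpos : 0 < N := lt_of_lt_of_le (Nat.pos_of_ne_zero hj0)
      (Finset.single_le_sum (fun i _ => Nat.zero_le _) (Finset.mem_univ j0))
    set g := Finset.univ.gcd n.1 with hgdef
    have hg0 : g ≠ 0 := by
      intro h
      apply hj0
      exact Finset.gcd_eq_zero_iff.mp h j0 (Finset.mem_univ j0)
    have hgN : g ≤ N := by
      have hdvd : g ∣ n.1 j0 := Finset.gcd_dvd (Finset.mem_univ j0)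
      exact le_trans (Nat.le_of_dvd (Nat.pos_of_ne_zero hj0) hdvd)
        (Finset.single_le_sum (fun i _ => Nat.zero_le _) (Finset.mem_univ j0))
    -- p-adic valuation bound on c n
    have hvc : -(padicValNat p g : ℤ) ≤ (c n).valuation := by
      have h1 := (Padic.norm_le_one_iff_val_nonneg _).mp (hc n)
      have hgq : ((g : ℕ) : ℚ_[p]) ≠ 0 := Nat.cast_ne_zero.mpr hg0
      rw [Padic.valuation_mul hgq hcn, Padic.valuation_natCast] at h1
      linarith
    have hlog : (padicValNat p g : ℝ) ≤ Real.logb p N := by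
      rw [Real.le_logb_iff_rpow_le hp1R (by exact_mod_cast hNpos)]
      rw [Real.rpow_natCast]
      have h1 : p ^ padicValNat p g ≤ N :=
        le_trans (Nat.le_of_dvd (Nat.pos_of_ne_zero hg0) pow_padicValNat_dvd) hgN
      exact_mod_cast h1
    have hec : -((e : ℝ) * Real.logb p N) ≤ ((e * (c n).valuation : ℤ) : ℝ) := by
      have h1 : -((padicValNat p g : ℕ) : ℝ) ≤ (((c n).valuation : ℤ) : ℝ) := by
        exact_mod_cast hvc
      have h2 : (e : ℝ) * (-((padicValNat p g : ℕ) : ℝ)) ≤ (e : ℝ) * (((c n).valuation : ℤ) : ℝ) :=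
        mul_le_mul_of_nonneg_left h1 he0
      have h3 : (e : ℝ) * ((padicValNat p g : ℕ) : ℝ) ≤ (e : ℝ) * Real.logb p N :=
        mul_le_mul_of_nonneg_left hlog he0
      push_cast
      linarith
    -- m is finite
    obtain ⟨kj, hkj⟩ := hv_int (x j0) (hxi j0 hj0)
    have hmtop : m ≠ ⊤ := by
      intro h
      have h2 := hmle j0
      rw [h, hkj, top_le_iff] at h2
      exact EReal.coe_ne_top _ h2
    have hmbot : m ≠ ⊥ := ne_bot_of_gt hm0
    set μ := m.toReal with hμdef
    have hμ : ((μ : ℝ) : EReal) = m := EReal.coe_toReal hmtop hmbot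
    -- per-term bound
    have hterm : ∀ i, (((n.1 i : ℝ) * μ : ℝ) : EReal) ≤ v (x i ^ n.1 i) := by
      intro i
      by_cases hni : n.1 i = 0
      · simp [hni, hv1]
      · obtain ⟨ki, hki⟩ := hv_int (x i) (hxi i hni)
        rw [hv_pow (x i) ki hki (n.1 i)]
        rw [EReal.coe_le_coe_iff]
        have hμki : μ ≤ (ki : ℝ) := by
          have h2 := hmle i
          rw [← hμ, hki] at h2
          exact EReal.coe_le_coe_iff.mp h2
        have : (n.1 i : ℝ) * μ ≤ (n.1 i : ℝ) * (ki : ℝ) :=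
          mul_le_mul_of_nonneg_left hμki (Nat.cast_nonneg _)
        push_cast
        linarith
    -- sum of per-term bounds
    have coe_sum : ∀ (f : Fin r → ℝ), ((∑ i, f i : ℝ) : EReal) = ∑ i, ((f i : ℝ) : EReal) := by
      intro f
      induction (Finset.univ : Finset (Fin r)) using Finset.cons_induction with
      | empty => simp
      | cons a s ha ih => rw [Finset.sum_cons, Finset.sum_cons, EReal.coe_add, ih]
    have hsum : (((N : ℝ) * μ : ℝ) : EReal) ≤ v (∏ i, x i ^ n.1 i) := by
      rw [hv_prod]
      have h1 : ((N : ℝ) * μ : ℝ) = ∑ i, ((n.1 i : ℝ) * μ : ℝ) := by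
        rw [← Finset.sum_mul, hNdef]
        push_cast
        ring
      rw [h1, coe_sum]
      exact Finset.sum_le_sum fun i _ => hterm i
    -- assemble
    have hNR : (∑ i, ((n.1 i : ℕ) : ℝ)) = ((N : ℕ) : ℝ) := by
      rw [hNdef]; push_cast; ring
    rw [hv_mul, hQp (c n) hcn, hNR]
    have hL : (((N : ℕ) : EReal) * m) - (((e : ℝ) * Real.logb p N : ℝ) : EReal)
        = ((((N : ℝ) * μ - (e : ℝ) * Real.logb p N) : ℝ) : EReal) := by
      rw [← hμ, ← EReal.coe_coe_eq_natCast, ← EReal.coe_mul, ← EReal.coe_sub]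
    rw [hL]
    calc ((((N : ℝ) * μ - (e : ℝ) * Real.logb p N) : ℝ) : EReal)
        ≤ ((((e * (c n).valuation : ℤ) : ℝ) + (N : ℝ) * μ : ℝ) : EReal) := by
          rw [EReal.coe_le_coe_iff]; linarith
      _ = (((e * (c n).valuation : ℤ) : ℝ) : EReal) + (((N : ℝ) * μ : ℝ) : EReal) :=
          EReal.coe_add _ _
      _ ≤ (((e * (c n).valuation : ℤ) : ℝ) : EReal) + v (∏ i, x i ^ n.1 i) :=
          add_le_add_right hsum _
  -- the norm is ultrametric
  have hultra : ∀ a b : L, ‖a + b‖ ≤ max ‖a‖ ‖b‖ := by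
    intro a b
    rcases le_total (v a) (v b) with h | h
    · have h2 : v a ≤ v (a + b) := le_trans (by simp [min_eq_left h]) (hv_add a b)
      exact le_max_of_le_left ((hv_norm a (a + b)).mp h2)
    · have h2 : v b ≤ v (a + b) := le_trans (by simp [min_eq_right h]) (hv_add a b)
      exact le_max_of_le_right ((hv_norm b (a + b)).mp h2)
  -- a uniformizer-like element
  obtain ⟨z, hz⟩ := hv_surj 1
  have hz0 : z ≠ 0 := by
    intro h
    rw [h, hv0] at hz
    exact (EReal.coe_ne_top _) hz.symm
  have hznorm : ‖z‖ < 1 := by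
    rcases lt_or_ge ‖z‖ 1 with h | h
    · exact h
    · exfalso
      have h2 : v z ≤ v 1 := (hv_norm z 1).mpr (by rwa [norm_one])
      rw [hz, hv1] at h2
      have h3 : (((1 : ℤ) : ℝ)) ≤ ((0 : ℝ)) := by exact_mod_cast h2
      norm_num at h3
  -- bounded-sum sets are finite
  have hfin : ∀ B : ℕ, {n : {n : Fin r → ℕ // n ≠ 0} | (∑ i, n.1 i) < B}.Finite := by
    intro B
    have hfin2 : {f : Fin r → ℕ | ∀ i, f i ≤ B}.Finite := by
      have h1 := Set.Finite.pi (fun _ : Fin r => Set.finite_Iic B)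
      apply h1.subset
      intro f hf
      exact fun i _ => hf i
    apply Set.Finite.of_finite_image (f := fun n => n.1)
    · apply hfin2.subset
      rintro f ⟨n, hn, rfl⟩ i
      exact le_of_lt (lt_of_le_of_lt
        (Finset.single_le_sum (fun i _ => Nat.zero_le _) (Finset.mem_univ i)) hn)
    · exact Set.injOn_of_injective Subtype.val_injective
  have hNtend : Tendsto (fun n : {n : Fin r → ℕ // n ≠ 0} => (∑ i, n.1 i)) cofinite atTop := by
    rw [tendsto_atTop]
    intro B
    rw [eventually_cofinite]
    exact (hfin B).subset (fun n hn => by simpa using not_le.mp hn)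
  -- tendsto ⊤
  have htop : Tendsto (fun n : {n : Fin r → ℕ // n ≠ 0} =>
      v (algebraMap ℚ_[p] L (c n) * ∏ i, x i ^ n.1 i)) cofinite (nhds ⊤) := by
    by_cases hmtop : m = ⊤
    · have hx0 : ∀ i, x i = 0 := by
        intro i
        have h2 := hmle i
        rw [hmtop] at h2
        exact (hv_top _).mp (top_le_iff.mp h2)
      refine Tendsto.congr (f₁ := fun _ => (⊤ : EReal)) ?_ tendsto_const_nhds
      intro n
      obtain ⟨j0, hj0⟩ : ∃ i, n.1 i ≠ 0 := by
        by_contra h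
        push_neg at h
        exact n.2 (funext fun i => h i)
      have h3 : ∏ i, x i ^ n.1 i = 0 :=
        Finset.prod_eq_zero (Finset.mem_univ j0) (by rw [hx0 j0, zero_pow hj0])
      rw [h3, mul_zero]
      exact hv0.symm
    · set μ := m.toReal with hμdef
      have hμ : ((μ : ℝ) : EReal) = m := EReal.coe_toReal hmtop (ne_bot_of_gt hm0)
      have hμpos : 0 < μ := by
        have h2 := hm0
        rw [← hμ] at h2
        exact_mod_cast h2
      have hlogp : 0 < Real.log p := Real.log_pos hp1R
      set C := (μ / 2) * Real.log p / ((e : ℝ) + 1) with hCdef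
      have hCpos : 0 < C := by positivity
      have heC : (e : ℝ) * C ≤ (μ / 2) * Real.log p := by
        have h1 : (e : ℝ) / ((e : ℝ) + 1) ≤ 1 :=
          div_le_one_of_le₀ (by linarith) (by linarith)
        have h2 : (e : ℝ) * C = (μ / 2) * Real.log p * ((e : ℝ) / ((e : ℝ) + 1)) := by
          rw [hCdef]; ring
        rw [h2]
        calc (μ / 2) * Real.log p * ((e : ℝ) / ((e : ℝ) + 1))
            ≤ (μ / 2) * Real.log p * 1 :=
              mul_le_mul_of_nonneg_left h1 (by positivity)
          _ = (μ / 2) * Real.log p := mul_one _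
      have hev : ∀ᶠ X : ℝ in atTop, (e : ℝ) * Real.logb p X ≤ (μ / 2) * X := by
        filter_upwards [Real.isLittleO_log_id_atTop.def hCpos, eventually_ge_atTop (1 : ℝ)]
          with X hX hX1
        have hXpos : 0 < X := lt_of_lt_of_le zero_lt_one hX1
        have hlogX : 0 ≤ Real.log X := Real.log_nonneg hX1
        rw [Real.norm_eq_abs, Real.norm_eq_abs, id, abs_of_nonneg hlogX,
          abs_of_pos hXpos] at hX
        have h4 : (e : ℝ) * Real.log X ≤ (μ / 2) * Real.log p * X := by
          calc (e : ℝ) * Real.log X ≤ (e : ℝ) * (C * X) :=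
                mul_le_mul_of_nonneg_left hX he0
            _ = ((e : ℝ) * C) * X := by ring
            _ ≤ ((μ / 2) * Real.log p) * X := mul_le_mul_of_nonneg_right heC hXpos.le
        rw [Real.logb, mul_div_assoc', div_le_iff₀ hlogp]
        linarith
      have hreal : Tendsto (fun X : ℝ => X * μ - (e : ℝ) * Real.logb p X) atTop atTop := by
        refine tendsto_atTop_mono' atTop ?_
          (Tendsto.const_mul_atTop (by positivity : (0 : ℝ) < μ / 2) tendsto_id)
        filter_upwards [hev] with X hX
        simp only [id_eq]
        linarith
      have hcomp : Tendsto (fun n : {n : Fin r → ℕ // n ≠ 0} =>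
          ((∑ i, n.1 i : ℕ) : ℝ) * μ - (e : ℝ) * Real.logb p ((∑ i, n.1 i : ℕ) : ℝ))
          cofinite atTop :=
        (hreal.comp tendsto_natCast_atTop_atTop).comp hNtend
      rw [EReal.tendsto_nhds_top_iff_real]
      intro M
      filter_upwards [hcomp.eventually_gt_atTop M] with n hn
      refine lt_of_lt_of_le ?_ (key n)
      have hL : (((∑ i, n.1 i : ℕ) : EReal) * m)
          - (((e : ℝ) * Real.logb p (∑ i, n.1 i) : ℝ) : EReal)
          = ((((∑ i, n.1 i : ℕ) : ℝ) * μ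
              - (e : ℝ) * Real.logb p ((∑ i, n.1 i : ℕ) : ℝ) : ℝ) : EReal) := by
        rw [← hμ, ← EReal.coe_coe_eq_natCast, ← EReal.coe_mul, ← EReal.coe_sub,
          EReal.coe_eq_coe_iff]
        push_cast
        ring
      rw [hL]
      exact_mod_cast hn
  -- summability
  haveI : IsUltrametricDist L :=
    IsUltrametricDist.isUltrametricDist_of_forall_norm_add_le_max_norm hultra
  have hzero : Tendsto (fun n : {n : Fin r → ℕ // n ≠ 0} =>
      algebraMap ℚ_[p] L (c n) * ∏ i, x i ^ n.1 i) cofinite (nhds 0) := by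
    rw [NormedAddCommGroup.tendsto_nhds_zero]
    intro ε hε
    obtain ⟨k, hk⟩ := exists_pow_lt_of_lt_one hε hznorm
    filter_upwards [EReal.tendsto_nhds_top_iff_real.mp htop ((k : ℕ) : ℝ)] with n hn
    have h3 : v (z ^ k) ≤ v (algebraMap ℚ_[p] L (c n) * ∏ i, x i ^ n.1 i) := by
      rw [hv_pow z 1 hz k, mul_one]
      calc ((((k : ℕ) : ℤ) : ℝ) : EReal) = (((k : ℕ) : ℝ) : EReal) := by norm_cast
        _ ≤ _ := le_of_lt hn
    have h4 := (hv_norm _ _).mp h3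
    rw [norm_pow] at h4
    exact lt_of_le_of_lt h4 hk
  exact ⟨key, htop, NonarchimedeanAddGroup.summable_of_tendsto_cofinite_zero hzero⟩
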